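/- Let (M, φ) be a size pair with reduced size function ℓ*. If p̄ = (x̄, ȳ) is a proper cornerpoint for ℓ* (i.e., μ(p̄) > 0), then: (i) for every x with x̄ ≤ x < ȳ, the function y ↦ ℓ*(x,y) is discontinuous at ȳ; and (ii) for every y with x̄ < y < ȳ, the function x ↦ ℓ*(x,y) is discontinuous at x̄. -/

import Mathlib

open Set Topology
open scoped ENNReal

noncomputable def rsf {M : Type*} [TopologicalSpace M] (φ : M → ℝ) (x y : ℝ) : ℕ :=
  Set.ncard {C : Set M | ∃ P, φ P ≤ x ∧ C = connectedComponentIn {Q | φ Q ≤ y} P}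

noncomputable def mult {M : Type*} [TopologicalSpace M] (φ : M → ℝ) (p : ℝ × ℝ) : ℤ :=
  sInf {z : ℤ | ∃ ε : ℝ, 0 < ε ∧ p.1 + ε < p.2 - ε ∧
    z = (rsf φ (p.1 + ε) (p.2 - ε) : ℤ) - (rsf φ (p.1 - ε) (p.2 - ε) : ℤ)
      - (rsf φ (p.1 + ε) (p.2 + ε) : ℤ) + (rsf φ (p.1 - ε) (p.2 + ε) : ℤ)}

noncomputable def multInf {M : Type*} [TopologicalSpace M] (φ : M → ℝ) (k : ℝ) : ℤ :=
  sInf {z : ℤ | ∃ ε : ℝ, 0 < ε ∧ k + ε < 1 / ε ∧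
    z = (rsf φ (k + ε) (1 / ε) : ℤ) - (rsf φ (k - ε) (1 / ε) : ℤ)}

open scoped Classical in
noncomputable def eDist (p q : ℝ × EReal) : ℝ≥0∞ :=
  if p.2 = ⊤ ∧ q.2 = ⊤ then ENNReal.ofReal |p.1 - q.1|
  else if p.2 = ⊤ ∨ q.2 = ⊤ then ⊤
  else ENNReal.ofReal (min (max |p.1 - q.1| |p.2.toReal - q.2.toReal|)
    (max ((p.2.toReal - p.1) / 2) ((q.2.toReal - q.1) / 2)))

def IsRepSeq {M : Type*} [TopologicalSpace M] (φ : M → ℝ) (a : ℕ → ℝ × EReal) : Prop :=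
  (∃ k : ℝ, a 0 = (k, ⊤) ∧ 0 < multInf φ k) ∧
  (∀ i : ℕ, 0 < i →
    (∃ x y : ℝ, a i = (x, (y : EReal)) ∧ x < y ∧ 0 < mult φ (x, y)) ∨
    (∃ x : ℝ, a i = (x, (x : EReal)))) ∧
  (∀ x y : ℝ, x < y → 0 < mult φ (x, y) →
    Set.ncard {i : ℕ | a i = (x, (y : EReal))} = (mult φ (x, y)).toNat) ∧
  {i : ℕ | ∃ x : ℝ, a i = (x, (x : EReal))}.Infinite

noncomputable def dMatchSeq (a b : ℕ → ℝ × EReal) : ℝ≥0∞ :=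
  ⨅ σ : {σ : ℕ → ℕ // Function.Bijective σ}, ⨆ i : ℕ, eDist (a i) (b (σ.1 i))

noncomputable def dMatch {M N : Type*} [TopologicalSpace M] [TopologicalSpace N]
    (φ : M → ℝ) (ψ : N → ℝ) : ℝ≥0∞ :=
  sInf {s : ℝ≥0∞ | ∃ a b, IsRepSeq φ a ∧ IsRepSeq ψ b ∧ s = dMatchSeq a b}

section Aux

variable {M : Type*} [TopologicalSpace M]

abbrev Kst (φ : M → ℝ) (a : ℝ) : Set M := {Q | φ Q ≤ a}

abbrev comps (φ : M → ℝ) (a y : ℝ) : Set (Set M) :=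
  {C : Set M | ∃ P, φ P ≤ a ∧ C = connectedComponentIn (Kst φ y) P}

lemma rsf_eq_ncard (φ : M → ℝ) (a y : ℝ) : rsf φ a y = (comps φ a y).ncard := rfl

lemma comps_mono_x {φ : M → ℝ} {a1 a2 y : ℝ} (h : a1 ≤ a2) :
    comps φ a1 y ⊆ comps φ a2 y := by
  rintro C ⟨P, hP, rfl⟩
  exact ⟨P, hP.trans h, rfl⟩

lemma comps_finite [CompactSpace M] [LocallyConnectedSpace M] {φ : M → ℝ}
    (hφ : Continuous φ) {a y : ℝ} (hay : a < y) : (comps φ a y).Finite := by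
  set U : Set M := {Q | φ Q < y} with hUdef
  have hU : IsOpen U := isOpen_lt hφ continuous_const
  have hKc : IsCompact (Kst φ a) := (isClosed_le hφ continuous_const).isCompact
  have hcov : Kst φ a ⊆ ⋃ P ∈ Kst φ a, connectedComponentIn U P := by
    intro P hP
    exact mem_biUnion hP (mem_connectedComponentIn (show P ∈ U from lt_of_le_of_lt hP hay))
  obtain ⟨t, hts, htf, hcov'⟩ := hKc.elim_finite_subcover_image
    (fun P _ => hU.connectedComponentIn) hcov
  apply (htf.image (fun P => connectedComponentIn (Kst φ y) P)).subset
  rintro C ⟨P, hPa, rfl⟩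
  obtain ⟨Q, hQt, hPQ⟩ : ∃ Q ∈ t, P ∈ connectedComponentIn U Q := by
    have := hcov' hPa; simpa using this
  refine ⟨Q, hQt, ?_⟩
  have hQU : Q ∈ U := lt_of_le_of_lt (hts hQt) hay
  have hsub : connectedComponentIn U Q ⊆ Kst φ y :=
    (connectedComponentIn_subset U Q).trans (fun R (hR : φ R < y) => le_of_lt hR)
  have hmem : P ∈ connectedComponentIn (Kst φ y) Q :=
    isPreconnected_connectedComponentIn.subset_connectedComponentIn
      (mem_connectedComponentIn hQU) hsub hPQ
  exact connectedComponentIn_eq hmem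

open Classical in
noncomputable def nxt (φ : M → ℝ) (y2 : ℝ) (C : Set M) : Set M :=
  if h : C.Nonempty then connectedComponentIn (Kst φ y2) h.some else ∅

lemma nxt_cc {φ : M → ℝ} {P : M} {y1 y2 : ℝ} (hP : φ P ≤ y1) (h12 : y1 ≤ y2) :
    nxt φ y2 (connectedComponentIn (Kst φ y1) P) = connectedComponentIn (Kst φ y2) P := by
  have hPm : P ∈ Kst φ y1 := hP
  have hne : (connectedComponentIn (Kst φ y1) P).Nonempty := ⟨P, mem_connectedComponentIn hPm⟩
  rw [nxt, dif_pos hne]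
  have hsub : connectedComponentIn (Kst φ y1) P ⊆ Kst φ y2 :=
    (connectedComponentIn_subset _ _).trans (fun R hR => le_trans hR h12)
  have hmem : hne.some ∈ connectedComponentIn (Kst φ y2) P :=
    isPreconnected_connectedComponentIn.subset_connectedComponentIn
      (mem_connectedComponentIn hPm) hsub hne.some_mem
  exact (connectedComponentIn_eq hmem).symm

lemma nxt_image {φ : M → ℝ} {a y1 y2 : ℝ} (ha : a ≤ y1) (h12 : y1 ≤ y2) :
    nxt φ y2 '' comps φ a y1 = comps φ a y2 := by
  apply subset_antisymm
  · rintro D ⟨C, ⟨P, hP, rfl⟩, rfl⟩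
    exact ⟨P, hP, (nxt_cc (hP.trans ha) h12)⟩
  · rintro D ⟨P, hP, rfl⟩
    exact ⟨connectedComponentIn (Kst φ y1) P, ⟨P, hP, rfl⟩, nxt_cc (hP.trans ha) h12⟩

lemma rsf_anti_y [CompactSpace M] [LocallyConnectedSpace M] {φ : M → ℝ}
    (hφ : Continuous φ) {a y1 y2 : ℝ} (hay : a < y1) (h12 : y1 ≤ y2) :
    rsf φ a y2 ≤ rsf φ a y1 := by
  rw [rsf_eq_ncard, rsf_eq_ncard, ← nxt_image hay.le h12]
  exact Set.ncard_image_le (comps_finite hφ hay)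

lemma rsf_mono_x [CompactSpace M] [LocallyConnectedSpace M] {φ : M → ℝ}
    (hφ : Continuous φ) {a1 a2 y : ℝ} (h : a1 ≤ a2) (h2y : a2 < y) :
    rsf φ a1 y ≤ rsf φ a2 y := by
  rw [rsf_eq_ncard, rsf_eq_ncard]
  exact Set.ncard_le_ncard (comps_mono_x h) (comps_finite hφ h2y)

lemma P1 [CompactSpace M] [LocallyConnectedSpace M] {φ : M → ℝ}
    (hφ : Continuous φ) {a x y1 y2 : ℝ} (ha : a ≤ x) (hx : x < y1) (h12 : y1 ≤ y2)
    (heq : rsf φ x y1 = rsf φ x y2) : rsf φ a y1 = rsf φ a y2 := by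
  have hfin1 := comps_finite hφ hx
  have himg : nxt φ y2 '' comps φ x y1 = comps φ x y2 := nxt_image hx.le h12
  have hinj : Set.InjOn (nxt φ y2) (comps φ x y1) := by
    apply Set.injOn_of_ncard_image_eq _ hfin1
    rw [himg, ← rsf_eq_ncard, ← rsf_eq_ncard]
    exact heq.symm
  have hinj' : Set.InjOn (nxt φ y2) (comps φ a y1) := hinj.mono (comps_mono_x ha)
  rw [rsf_eq_ncard, rsf_eq_ncard, ← nxt_image (ha.trans hx.le) h12,
    Set.ncard_image_of_injOn hinj']

lemma P2 [CompactSpace M] [LocallyConnectedSpace M] {φ : M → ℝ}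
    (hφ : Continuous φ) {a1 a2 y1 y2 : ℝ} (h12 : a1 ≤ a2) (ha : a2 < y1) (hy : y1 ≤ y2)
    (heq : rsf φ a1 y1 = rsf φ a2 y1) : rsf φ a1 y2 = rsf φ a2 y2 := by
  have hsets : comps φ a1 y1 = comps φ a2 y1 := by
    apply Set.eq_of_subset_of_ncard_le (comps_mono_x h12) _ (comps_finite hφ ha)
    rw [← rsf_eq_ncard, ← rsf_eq_ncard]
    exact heq.ge
  have hsets2 : comps φ a1 y2 = comps φ a2 y2 := by
    apply subset_antisymm (comps_mono_x h12)
    rintro D ⟨P, hPa2, rfl⟩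
    have hC : connectedComponentIn (Kst φ y1) P ∈ comps φ a2 y1 := ⟨P, hPa2, rfl⟩
    rw [← hsets] at hC
    obtain ⟨P', hP', hCeq⟩ := hC
    refine ⟨P', hP', ?_⟩
    have hPy1 : P ∈ Kst φ y1 := le_of_lt (lt_of_le_of_lt hPa2 ha)
    have hsub : connectedComponentIn (Kst φ y1) P ⊆ Kst φ y2 :=
      (connectedComponentIn_subset _ _).trans (fun R hR => le_trans hR hy)
    have hP'mem : P' ∈ connectedComponentIn (Kst φ y1) P := by
      rw [hCeq]
      exact mem_connectedComponentIn
        (show P' ∈ Kst φ y1 from le_of_lt (lt_of_le_of_lt (hP'.trans h12) ha))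
    have : P' ∈ connectedComponentIn (Kst φ y2) P :=
      isPreconnected_connectedComponentIn.subset_connectedComponentIn
        (mem_connectedComponentIn hPy1) hsub hP'mem
    exact connectedComponentIn_eq this
  rw [rsf_eq_ncard, rsf_eq_ncard, hsets2]

lemma closed_ccIn {F : Set M} (hF : IsClosed F) (x : M) :
    IsClosed (connectedComponentIn F x) := by
  by_cases hx : x ∈ F
  · have h1 : IsPreconnected (closure (connectedComponentIn F x)) :=
      isPreconnected_connectedComponentIn.closure
    have h2 : closure (connectedComponentIn F x) ⊆ F :=
      (closure_mono (connectedComponentIn_subset F x)).trans hF.closure_eq.subset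
    have h3 : closure (connectedComponentIn F x) ⊆ connectedComponentIn F x :=
      h1.subset_connectedComponentIn (subset_closure (mem_connectedComponentIn hx)) h2
    exact isClosed_of_closure_subset h3
  · rw [connectedComponentIn_eq_empty hx]; exact isClosed_empty

lemma P3 [CompactSpace M] [LocallyConnectedSpace M] {φ : M → ℝ}
    (hφ : Continuous φ) {a y' ε2 : ℝ} (hε2 : 0 < ε2) (hlt : a + ε2 < y')
    (hall : ∀ ε : ℝ, 0 < ε → ε ≤ ε2 → rsf φ a y' + 1 ≤ rsf φ (a + ε) y') : False := by
  set A := {n : ℕ | ∃ ε : ℝ, 0 < ε ∧ ε ≤ ε2 ∧ n = (comps φ (a + ε) y').ncard} with hAdef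
  have hA : A.Nonempty := ⟨_, ε2, hε2, le_rfl, rfl⟩
  obtain ⟨ε', hε'pos, hε'le, hcard⟩ := Nat.sInf_mem hA
  have key : comps φ (a + ε') y' ⊆ comps φ a y' := by
    intro C hC
    have hmem : ∀ ε : ℝ, 0 < ε → ε ≤ ε2 → C ∈ comps φ (a + ε) y' := by
      intro ε hε hεle
      rcases le_total ε' ε with h | h
      · exact comps_mono_x (by linarith) hC
      · have hsub : comps φ (a + ε) y' ⊆ comps φ (a + ε') y' := comps_mono_x (by linarith)
        have hfin : (comps φ (a + ε') y').Finite := comps_finite hφ (by linarith)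
        have hle : (comps φ (a + ε') y').ncard ≤ (comps φ (a + ε) y').ncard := by
          rw [← hcard]
          exact Nat.sInf_le ⟨ε, hε, hεle, rfl⟩
        have heqs := Set.eq_of_subset_of_ncard_le hsub hle hfin
        rw [heqs]; exact hC
    obtain ⟨P0, hP0, hC0⟩ := hmem ε2 hε2 le_rfl
    have hCcl : IsClosed C := by
      rw [hC0]; exact closed_ccIn (isClosed_le hφ continuous_const) _
    set t : ℕ → Set M := fun n => C ∩ Kst φ (a + ε2 / (n + 1)) with htdef
    have htn : ∀ n, (t n).Nonempty := by
      intro n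
      have hn1 : (1 : ℝ) ≤ (n : ℝ) + 1 := by
        have : (0 : ℝ) ≤ (n : ℝ) := Nat.cast_nonneg n
        linarith
      have hεn : 0 < ε2 / ((n : ℝ) + 1) := by positivity
      have hεn2 : ε2 / ((n : ℝ) + 1) ≤ ε2 := by
        apply div_le_self hε2.le hn1
      obtain ⟨P, hP, hCeq⟩ := hmem _ hεn hεn2
      refine ⟨P, ?_, hP⟩
      rw [hCeq]
      exact mem_connectedComponentIn (show φ P ≤ y' by
        have h4 : φ P ≤ a + ε2 / ((n:ℝ) + 1) := hP
        linarith)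
    have htd : ∀ n, t (n + 1) ⊆ t n := by
      intro n
      apply Set.inter_subset_inter_right
      intro Q hQ
      have h1 : (0:ℝ) < (n:ℝ) + 1 := by positivity
      have h2 : ((n:ℝ) + 1) ≤ ((n:ℝ) + 1 + 1) := by linarith
      have : ε2 / ((n:ℝ) + 1 + 1) ≤ ε2 / ((n:ℝ) + 1) :=
        div_le_div_of_nonneg_left hε2.le h1 h2
      have hQ' : φ Q ≤ a + ε2 / ((n:ℝ) + 1 + 1) := by
        simpa [Kst] using hQ
      show φ Q ≤ a + ε2 / ((n:ℝ) + 1)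
      linarith
    have htcl : ∀ n, IsClosed (t n) := fun n => hCcl.inter (isClosed_le hφ continuous_const)
    have htc : IsCompact (t 0) := (htcl 0).isCompact
    obtain ⟨Q, hQ⟩ := IsCompact.nonempty_iInter_of_sequence_nonempty_isCompact_isClosed
      t htd htn htc htcl
    simp only [Set.mem_iInter, Set.mem_inter_iff] at hQ
    have hQC : Q ∈ C := (hQ 0).1
    have hQa : φ Q ≤ a := by
      apply le_of_forall_pos_le_add
      intro δ hδ
      obtain ⟨n, hn⟩ := exists_nat_gt (ε2 / δ)
      have h1 : (0:ℝ) < (n:ℝ) + 1 := by positivity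
      have h2 : ε2 / ((n:ℝ) + 1) ≤ δ := by
        rw [div_le_iff₀ h1]
        have : ε2 / δ < (n:ℝ) + 1 := by
          have : (ε2 / δ) < (n:ℝ) := hn
          linarith
        calc ε2 = (ε2 / δ) * δ := by field_simp
          _ ≤ ((n:ℝ) + 1) * δ := by
              apply mul_le_mul_of_nonneg_right this.le hδ.le
          _ = δ * ((n:ℝ) + 1) := by ring
      have h3 : φ Q ≤ a + ε2 / ((n:ℝ) + 1) := (hQ n).2
      linarith
    refine ⟨Q, hQa, ?_⟩
    rw [hC0]
    exact connectedComponentIn_eq (hC0 ▸ hQC)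
  have hfin : (comps φ a y').Finite := comps_finite hφ (by linarith)
  have h1 : (comps φ (a + ε') y').ncard ≤ (comps φ a y').ncard :=
    Set.ncard_le_ncard key hfin
  have h2 := hall ε' hε'pos hε'le
  rw [rsf_eq_ncard, rsf_eq_ncard] at h2
  omega

end Aux

lemma mult_pos_bound {M : Type*} [TopologicalSpace M] {φ : M → ℝ} {xb yb : ℝ}
    (hμ : 0 < mult φ (xb, yb)) {ε : ℝ} (hε : 0 < ε) (h2 : xb + ε < yb - ε) :
    1 ≤ (rsf φ (xb + ε) (yb - ε) : ℤ) - (rsf φ (xb - ε) (yb - ε) : ℤ)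
      - (rsf φ (xb + ε) (yb + ε) : ℤ) + (rsf φ (xb - ε) (yb + ε) : ℤ) := by
  set S : Set ℤ := {z : ℤ | ∃ ε : ℝ, 0 < ε ∧ xb + ε < yb - ε ∧
    z = (rsf φ (xb + ε) (yb - ε) : ℤ) - (rsf φ (xb - ε) (yb - ε) : ℤ)
      - (rsf φ (xb + ε) (yb + ε) : ℤ) + (rsf φ (xb - ε) (yb + ε) : ℤ)} with hS
  have hmult : mult φ (xb, yb) = sInf S := rfl
  have hz : (rsf φ (xb + ε) (yb - ε) : ℤ) - (rsf φ (xb - ε) (yb - ε) : ℤ)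
      - (rsf φ (xb + ε) (yb + ε) : ℤ) + (rsf φ (xb - ε) (yb + ε) : ℤ) ∈ S :=
    ⟨ε, hε, h2, rfl⟩
  by_cases hb : BddBelow S
  · have h := csInf_le hb hz
    rw [← hmult] at h
    omega
  · rw [hmult, Int.csInf_of_not_bddBelow hb] at hμ
    exact absurd hμ (lt_irrefl 0)

theorem cornerpoint_propagates_discontinuities
    {M : Type*} [TopologicalSpace M] [CompactSpace M] [ConnectedSpace M] [LocallyConnectedSpace M] [T2Space M] {φ : M → ℝ} (hφ : Continuous φ)
    (xb yb : ℝ) (hd : xb < yb) (hμ : 0 < mult φ (xb, yb)) :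
    (∀ x : ℝ, xb ≤ x → x < yb →
      ¬ ∃ ε > 0, ∀ y' : ℝ, x < y' → |y' - yb| < ε → rsf φ x y' = rsf φ x yb) ∧
    (∀ y : ℝ, xb < y → y < yb →
      ¬ ∃ ε > 0, ∀ x' : ℝ, x' < y → |x' - xb| < ε → rsf φ x' y = rsf φ xb y) := by
  constructor
  · intro x hx1 hx2
    rintro ⟨ε0, hε0, hcont⟩
    rcases eq_or_lt_of_le hx1 with heq | hlt
    · subst heq
      set δ := min (ε0 / 2) ((yb - xb) / 4) with hδdef
      have hδa : δ ≤ ε0 / 2 := min_le_left _ _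
      have hδb : δ ≤ (yb - xb) / 4 := min_le_right _ _
      have hδpos : 0 < δ := lt_min (by linarith) (by linarith)
      have hδ2 : xb + δ < yb - δ := by linarith
      refine P3 hφ hδpos hδ2 ?_
      intro ε hε hεδ
      have hεlt : xb + ε < yb - ε := by linarith
      have hbound := mult_pos_bound hμ hε hεlt
      have hc1 : rsf φ xb (yb - ε) = rsf φ xb yb := hcont _ (by linarith)
        (by rw [show yb - ε - yb = -ε by ring, abs_neg, abs_of_pos hε]; linarith)
      have hc2 : rsf φ xb (yb + ε) = rsf φ xb yb := hcont _ (by linarith)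
        (by rw [show yb + ε - yb = ε by ring, abs_of_pos hε]; linarith)
      have e1 : rsf φ (xb - ε) (yb - ε) = rsf φ (xb - ε) (yb + ε) :=
        P1 hφ (show xb - ε ≤ xb by linarith) (by linarith) (by linarith)
          (hc1.trans hc2.symm)
      have hm1 : rsf φ xb (yb + ε) ≤ rsf φ (xb + ε) (yb + ε) :=
        rsf_mono_x hφ (by linarith) (by linarith)
      have hm2 : rsf φ (xb + ε) (yb - ε) ≤ rsf φ (xb + ε) (yb - δ) :=
        rsf_anti_y hφ (by linarith) (by linarith)
      have hcδ : rsf φ xb (yb - δ) = rsf φ xb yb := hcont _ (by linarith)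
        (by rw [show yb - δ - yb = -δ by ring, abs_neg, abs_of_pos hδpos]; linarith)
      omega
    · set ε := min (min (ε0 / 2) (x - xb)) ((yb - x) / 2) with hεdef
      have h1 : ε ≤ ε0 / 2 := (min_le_left _ _).trans (min_le_left _ _)
      have h2 : ε ≤ x - xb := (min_le_left _ _).trans (min_le_right _ _)
      have h3 : ε ≤ (yb - x) / 2 := min_le_right _ _
      have hεpos : 0 < ε := lt_min (lt_min (by linarith) (by linarith)) (by linarith)
      have hxy : x < yb - ε := by linarith
      have hεlt : xb + ε < yb - ε := by linarith
      have hc1 : rsf φ x (yb - ε) = rsf φ x yb := hcont _ (by linarith)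
        (by rw [show yb - ε - yb = -ε by ring, abs_neg, abs_of_pos hεpos]; linarith)
      have hc2 : rsf φ x (yb + ε) = rsf φ x yb := hcont _ (by linarith)
        (by rw [show yb + ε - yb = ε by ring, abs_of_pos hεpos]; linarith)
      have heq2 : rsf φ x (yb - ε) = rsf φ x (yb + ε) := hc1.trans hc2.symm
      have e1 := P1 hφ (show xb - ε ≤ x by linarith) hxy (by linarith) heq2
      have e2 := P1 hφ (show xb + ε ≤ x by linarith) hxy (by linarith) heq2
      have hbound := mult_pos_bound hμ hεpos hεlt
      omega
  · intro y hy1 hy2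
    rintro ⟨ε0, hε0, hcont⟩
    set ε := min (min (ε0 / 2) ((y - xb) / 2)) ((yb - y) / 2) with hεdef
    have h1 : ε ≤ ε0 / 2 := (min_le_left _ _).trans (min_le_left _ _)
    have h2 : ε ≤ (y - xb) / 2 := (min_le_left _ _).trans (min_le_right _ _)
    have h3 : ε ≤ (yb - y) / 2 := min_le_right _ _
    have hεpos : 0 < ε := lt_min (lt_min (by linarith) (by linarith)) (by linarith)
    have hc1 : rsf φ (xb + ε) y = rsf φ xb y := hcont _ (by linarith)
      (by rw [show xb + ε - xb = ε by ring, abs_of_pos hεpos]; linarith)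
    have hc2 : rsf φ (xb - ε) y = rsf φ xb y := hcont _ (by linarith)
      (by rw [show xb - ε - xb = -ε by ring, abs_neg, abs_of_pos hεpos]; linarith)
    have heq2 : rsf φ (xb - ε) y = rsf φ (xb + ε) y := hc2.trans hc1.symm
    have e1 := P2 hφ (show xb - ε ≤ xb + ε by linarith) (show xb + ε < y by linarith)
      (show y ≤ yb - ε by linarith) heq2
    have e2 := P2 hφ (show xb - ε ≤ xb + ε by linarith) (show xb + ε < y by linarith)
      (show y ≤ yb + ε by linarith) heq2
    have hbound := mult_pos_bound hμ hεpos (by linarith)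
    omega
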